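/- Let n ≥ 1. In ℤ[X₀, …, X_{n−1}], let I′ be the ideal generated by Xᵢ² − (−2·Xᵢ + X_{i+1}) for 0 ≤ i ≤ n−2 together with X_{n−1}². Then for every polynomial f ∈ ℤ[X₀, …, X_{n−1}] there exists a unique multilinear polynomial g (every exponent in every monomial of its support is at most 1) such that f − g ∈ I′. -/

import Mathlib

open MvPolynomial

/-- The generators of the ideal `I′`: `Xᵢ² − (−2Xᵢ + X_{i+1})` for `i ≤ n-2`, and `X_{n-1}²`. -/
noncomputable def gens' (n : ℕ) : Fin n → MvPolynomial (Fin n) ℤ := fun i =>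
  if h : (i : ℕ) + 1 < n then X i ^ 2 - (-2 * X i + X ⟨(i : ℕ) + 1, h⟩) else X i ^ 2

namespace Stmt12

variable {n : ℕ}

/-- weight of variable i -/
def w (n : ℕ) (i : Fin n) : ℕ := 2 ^ (i : ℕ) * (n - i)

lemma w_pos (i : Fin n) : 0 < w n i :=
  Nat.mul_pos (pow_pos two_pos _) (Nat.sub_pos_of_lt i.isLt)

lemma w_succ_lt (i : Fin n) (h : (i:ℕ)+1 < n) : w n ⟨(i:ℕ)+1, h⟩ < 2 * w n i := by
  simp only [w]
  have : (2:ℕ) * (2 ^ (i:ℕ) * (n - i)) = 2 ^ ((i:ℕ)+1) * (n - i) := by ring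
  rw [this]
  exact Nat.mul_lt_mul_of_le_of_lt (le_refl _) (by omega) (pow_pos two_pos _)

/-- weight of a monomial -/
def W (n : ℕ) (m : Fin n →₀ ℕ) : ℕ := m.sum fun i k => k * w n i

lemma W_add (a b : Fin n →₀ ℕ) : W n (a + b) = W n a + W n b := by
  unfold W
  exact Finsupp.sum_add_index (by simp) (by intro i _ k l; ring)

lemma W_single (i : Fin n) (k : ℕ) : W n (Finsupp.single i k) = k * w n i := by
  unfold W
  rw [Finsupp.sum_single_index]
  simp


def Good (n : ℕ) (f : MvPolynomial (Fin n) ℤ) : Prop :=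
  ∃ g : MvPolynomial (Fin n) ℤ, (∀ m ∈ g.support, ∀ i : Fin n, m i ≤ 1) ∧
    f - g ∈ Ideal.span (Set.range (gens' n))

lemma good_mem {f} (hf : f ∈ Ideal.span (Set.range (gens' n))) : Good n f :=
  ⟨0, by simp, by simpa using hf⟩

lemma good_zero : Good n 0 := good_mem (Ideal.zero_mem _)

lemma good_add {f f'} (h : Good n f) (h' : Good n f') : Good n (f + f') := by
  obtain ⟨g, hg, hfg⟩ := h; obtain ⟨g', hg', hfg'⟩ := h'
  refine ⟨g + g', ?_, ?_⟩
  · intro m hm i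
    rcases Finset.mem_union.mp (MvPolynomial.support_add hm) with h | h
    · exact hg m h i
    · exact hg' m h i
  · have : f + f' - (g + g') = (f - g) + (f' - g') := by ring
    rw [this]; exact Ideal.add_mem _ hfg hfg'

lemma good_smul (c : ℤ) {f} (h : Good n f) : Good n (c • f) := by
  obtain ⟨g, hg, hfg⟩ := h
  refine ⟨c • g, ?_, ?_⟩
  · intro m hm i
    exact hg m (MvPolynomial.support_smul hm) i
  · have : c • f - c • g = MvPolynomial.C c * (f - g) := by
      rw [← smul_sub, MvPolynomial.smul_eq_C_mul]
    rw [this]; exact Ideal.mul_mem_left _ _ hfg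


lemma X_eq_monomial (i : Fin n) : (X i : MvPolynomial (Fin n) ℤ) = monomial (Finsupp.single i 1) 1 := by
  rw [← X_pow_eq_monomial, pow_one]

lemma monomial_factor (m : Fin n →₀ ℕ) (i : Fin n) (hi : 2 ≤ m i) :
    Finsupp.single i 2 + (m - Finsupp.single i 2) = m := by
  ext j
  by_cases hj : j = i
  · subst hj
    simp only [Finsupp.add_apply, Finsupp.tsub_apply, Finsupp.single_eq_same]
    omega
  · simp [Finsupp.single_eq_of_ne' (Ne.symm hj), Finsupp.tsub_apply]

lemma good_monomial : ∀ N : ℕ, ∀ m : Fin n →₀ ℕ, W n m ≤ N → Good n (monomial m 1) := by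
  intro N
  induction N using Nat.strong_induction_on with
  | _ N ih =>
    intro m hm
    by_cases hml : ∀ i : Fin n, m i ≤ 1
    · refine ⟨monomial m 1, ?_, by simp⟩
      intro m' hm' i
      rw [MvPolynomial.support_monomial] at hm'
      simp at hm'
      subst hm'
      exact hml i
    · push_neg at hml
      obtain ⟨i, hi⟩ := hml
      have hi2 : 2 ≤ m i := hi
      set m' := m - Finsupp.single i 2 with hm'def
      have hsplit : Finsupp.single i 2 + m' = m := monomial_factor m i hi2
      have key : monomial m (1:ℤ) = X i ^ 2 * monomial m' 1 := by
        rw [X_pow_eq_monomial, MvPolynomial.monomial_mul, one_mul, hsplit]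
      have hWm : W n m = 2 * w n i + W n m' := by
        rw [← hsplit, W_add, W_single]
      by_cases h : (i:ℕ) + 1 < n
      · have hgen : gens' n i = X i ^ 2 - (-2 * X i + X ⟨(i:ℕ)+1, h⟩) := dif_pos h
        have e1 : (X i : MvPolynomial (Fin n) ℤ) * monomial m' 1
            = monomial (Finsupp.single i 1 + m') 1 := by
          rw [X_eq_monomial, MvPolynomial.monomial_mul, one_mul]
        have e2 : (X (⟨(i:ℕ)+1, h⟩ : Fin n) : MvPolynomial (Fin n) ℤ) * monomial m' 1
            = monomial (Finsupp.single (⟨(i:ℕ)+1, h⟩ : Fin n) 1 + m') 1 := by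
          rw [X_eq_monomial, MvPolynomial.monomial_mul, one_mul]
        have key2 : monomial m (1:ℤ) = gens' n i * monomial m' 1 +
            ((-2 : ℤ) • monomial (Finsupp.single i 1 + m') 1 +
              monomial (Finsupp.single (⟨(i:ℕ)+1, h⟩ : Fin n) 1 + m') 1) := by
          rw [← e1, ← e2, key, hgen, MvPolynomial.smul_eq_C_mul]
          have hC : (MvPolynomial.C (-2 : ℤ) : MvPolynomial (Fin n) ℤ) = -2 := by
            simp [map_neg, map_ofNat]
          rw [hC]; ring
        rw [key2]
        apply good_add
        · exact good_mem (Ideal.mul_mem_right _ _ (Ideal.subset_span ⟨i, rfl⟩))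
        apply good_add
        · apply good_smul
          apply ih (W n (Finsupp.single i 1 + m')) _ _ le_rfl
          rw [W_add, W_single]
          have := w_pos i
          omega
        · apply ih (W n (Finsupp.single (⟨(i:ℕ)+1, h⟩ : Fin n) 1 + m')) _ _ le_rfl
          rw [W_add, W_single]
          have := w_succ_lt i h
          omega
      · have hgen : gens' n i = X i ^ 2 := dif_neg h
        rw [key, ← hgen]
        exact good_mem (Ideal.mul_mem_right _ _ (Ideal.subset_span ⟨i, rfl⟩))

lemma good_all (f : MvPolynomial (Fin n) ℤ) : Good n f := by
  rw [← MvPolynomial.support_sum_monomial_coeff f]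
  apply Finset.sum_induction _ (Good n) (fun _ _ => good_add) good_zero
  intro m _
  have : monomial m (MvPolynomial.coeff m f) = (MvPolynomial.coeff m f) • monomial m (1:ℤ) := by
    rw [MvPolynomial.smul_monomial, smul_eq_mul, mul_one]
  rw [this]
  exact good_smul _ (good_monomial (W n m) m le_rfl)


/-- binary representation uniqueness -/
lemma binary_inj : ∀ {n : ℕ} (a b : Fin n → ℕ), (∀ i, a i ≤ 1) → (∀ i, b i ≤ 1) →
    (∑ i, a i * 2^(i:ℕ)) = (∑ i, b i * 2^(i:ℕ)) → ∀ i, a i = b i := by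
  intro n
  induction n with
  | zero => intro a b _ _ _ i; exact i.elim0
  | succ n ihn =>
    intro a b ha hb hsum
    rw [Fin.sum_univ_succ, Fin.sum_univ_succ] at hsum
    have ea : ∀ (c : Fin (n+1) → ℕ),
        (∑ j : Fin n, c j.succ * 2^((j.succ : Fin (n+1)):ℕ)) = 2 * ∑ j : Fin n, c j.succ * 2^(j:ℕ) := by
      intro c
      rw [Finset.mul_sum]
      apply Finset.sum_congr rfl
      intro j _
      rw [Fin.val_succ, pow_succ]
      ring
    rw [ea a, ea b] at hsum
    simp only [Fin.val_zero, pow_zero, mul_one] at hsum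
    have h0 : a 0 = b 0 := by have := ha 0; have := hb 0; omega
    have htail : (∑ j : Fin n, a j.succ * 2^(j:ℕ)) = ∑ j : Fin n, b j.succ * 2^(j:ℕ) := by omega
    intro i
    induction i using Fin.cases with
    | zero => exact h0
    | succ j =>
        exact ihn (fun k => a k.succ) (fun k => b k.succ) (fun k => ha k.succ) (fun k => hb k.succ) htail j


noncomputable def psi (n : ℕ) : MvPolynomial (Fin n) ℤ →ₐ[ℤ] Polynomial ℤ :=
  MvPolynomial.aeval (fun i : Fin n => Polynomial.X ^ (2^(i:ℕ)) - 1)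

noncomputable def q (n : ℕ) : Polynomial ℤ := (Polynomial.X ^ (2^(n-1)) - 1)^2

lemma psi_gens_mem (hn : 1 ≤ n) (i : Fin n) :
    psi n (gens' n i) ∈ Ideal.span {q n} := by
  by_cases h : (i:ℕ) + 1 < n
  · have hgen : gens' n i = X i ^ 2 - (-2 * X i + X ⟨(i:ℕ)+1, h⟩) := dif_pos h
    have : psi n (gens' n i) = 0 := by
      rw [hgen]
      simp only [psi, map_sub, map_add, map_mul, map_pow, map_neg, map_ofNat,
        MvPolynomial.aeval_X]
      have hp : (2:ℕ)^((i:ℕ)+1) = 2^(i:ℕ) * 2 := by rw [pow_succ]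
      rw [hp, pow_mul]
      ring
    rw [this]; exact Ideal.zero_mem _
  · have hgen : gens' n i = X i ^ 2 := dif_neg h
    have hi : (i:ℕ) = n - 1 := by have := i.isLt; omega
    have : psi n (gens' n i) = q n := by
      rw [hgen]
      simp only [psi, map_pow, MvPolynomial.aeval_X]
      rw [hi]; rfl
    rw [this]
    exact Ideal.subset_span rfl

lemma psi_mem (hn : 1 ≤ n) {f : MvPolynomial (Fin n) ℤ}
    (hf : f ∈ Ideal.span (Set.range (gens' n))) : psi n f ∈ Ideal.span {q n} := by
  have h1 : psi n f ∈ Ideal.map (psi n).toRingHom (Ideal.span (Set.range (gens' n))) :=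
    Ideal.mem_map_of_mem _ hf
  rw [Ideal.map_span] at h1
  refine Ideal.span_le.mpr ?_ h1
  rintro _ ⟨_, ⟨i, rfl⟩, rfl⟩
  exact psi_gens_mem hn i

noncomputable def P (n : ℕ) (m : Fin n →₀ ℕ) : Polynomial ℤ :=
  ∏ i : Fin n, (Polynomial.X ^ (2^(i:ℕ)) - 1)^(m i)

def d (n : ℕ) (m : Fin n →₀ ℕ) : ℕ := ∑ i : Fin n, m i * 2^(i:ℕ)

lemma monic_factor (k : ℕ) : ((Polynomial.X : Polynomial ℤ) ^ (2^k) - 1).Monic := by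
  have := Polynomial.monic_X_pow_sub_C (1 : ℤ) (n := 2^k) (by positivity)
  simpa using this

lemma monic_P (m : Fin n →₀ ℕ) : (P n m).Monic :=
  Polynomial.monic_prod_of_monic _ _ (fun i _ => (monic_factor (i:ℕ)).pow _)

lemma natDegree_P (m : Fin n →₀ ℕ) : (P n m).natDegree = d n m := by
  unfold P d
  rw [Polynomial.natDegree_prod _ _ (fun (i : Fin n) _ => ((monic_factor (i:ℕ)).pow (m i)).ne_zero)]
  apply Finset.sum_congr rfl
  intro i _
  rw [Polynomial.natDegree_pow]
  have hd : ((Polynomial.X : Polynomial ℤ)^(2^(i:ℕ)) - 1).natDegree = 2^(i:ℕ) := by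
    simpa using Polynomial.natDegree_X_pow_sub_C (n := 2^(i:ℕ)) (r := (1:ℤ))
  rw [hd]

lemma psi_monomial (m : Fin n →₀ ℕ) (c : ℤ) :
    psi n (monomial m c) = Polynomial.C c * P n m := by
  unfold psi P
  rw [MvPolynomial.aeval_monomial,
    Finsupp.prod_fintype _ _ (fun i => pow_zero _)]
  simp [algebraMap_int_eq, Polynomial.C_eq_intCast]


lemma sum_two_pow (N : ℕ) : ∑ i ∈ Finset.range N, 2^i = 2^N - 1 := by
  induction N with
  | zero => simp
  | succ N ih =>
    rw [Finset.sum_range_succ, ih, pow_succ]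
    have : 1 ≤ 2^N := Nat.one_le_two_pow
    omega

lemma d_lt (m : Fin n →₀ ℕ) (hml : ∀ i, m i ≤ 1) : d n m < 2^n := by
  have h1 : d n m ≤ ∑ i : Fin n, 1 * 2^(i:ℕ) :=
    Finset.sum_le_sum (fun i _ => Nat.mul_le_mul_right _ (hml i))
  have h2 : ∑ i : Fin n, 1 * 2^(i:ℕ) = 2^n - 1 := by
    simp only [one_mul]
    rw [Fin.sum_univ_eq_sum_range (fun i => 2^i), sum_two_pow]
  have : 1 ≤ 2^n := Nat.one_le_two_pow
  omega

lemma monic_q (n : ℕ) : (q n).Monic := (monic_factor (n-1)).pow 2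

lemma natDegree_q (hn : 1 ≤ n) : (q n).natDegree = 2^n := by
  unfold q
  rw [Polynomial.natDegree_pow]
  have h1 : ((Polynomial.X : Polynomial ℤ)^(2^(n-1)) - 1).natDegree = 2^(n-1) := by
    simpa using Polynomial.natDegree_X_pow_sub_C (n := 2^(n-1)) (r := (1:ℤ))
  rw [h1, ← pow_succ']
  congr 1
  omega

lemma multilinear_zero (hn : 1 ≤ n) (g : MvPolynomial (Fin n) ℤ)
    (hml : ∀ m ∈ g.support, ∀ i : Fin n, m i ≤ 1)
    (hg : g ∈ Ideal.span (Set.range (gens' n))) : g = 0 := by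
  have hrepr : psi n g = ∑ m ∈ g.support, Polynomial.C (MvPolynomial.coeff m g) * P n m := by
    conv_lhs => rw [← MvPolynomial.support_sum_monomial_coeff g]
    rw [map_sum]
    exact Finset.sum_congr rfl (fun m _ => psi_monomial m _)
  have hdvd : q n ∣ psi n g := Ideal.mem_span_singleton.mp (psi_mem hn hg)
  have hdeg : (psi n g).natDegree < 2^n := by
    rw [hrepr]
    have h1 : 1 ≤ 2^n := Nat.one_le_two_pow
    refine lt_of_le_of_lt (Polynomial.natDegree_sum_le_of_forall_le _ _
      (fun m hm => ?_)) (show 2^n - 1 < 2^n by omega)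
    refine le_trans (Polynomial.natDegree_mul_le) ?_
    rw [Polynomial.natDegree_C, natDegree_P, zero_add]
    have := d_lt m (hml m hm)
    omega
  have hzero : psi n g = 0 := by
    by_contra h0
    have := Polynomial.natDegree_le_of_dvd hdvd h0
    rw [natDegree_q hn] at this
    omega
  by_contra hg0
  obtain ⟨m₀, hm₀, hmax⟩ := Finset.exists_max_image g.support (d n)
    (MvPolynomial.support_nonempty.mpr hg0)
  have hcoeff : (psi n g).coeff (d n m₀) = MvPolynomial.coeff m₀ g := by
    rw [hrepr, Polynomial.finset_sum_coeff, Finset.sum_eq_single m₀]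
    · rw [Polynomial.coeff_C_mul, ← natDegree_P m₀, Polynomial.coeff_natDegree,
        (monic_P m₀), mul_one]
    · intro m hm hne
      rw [Polynomial.coeff_C_mul]
      have hdm : d n m ≠ d n m₀ := by
        intro he
        apply hne
        ext i
        exact binary_inj (fun i => m i) (fun i => m₀ i) (hml m hm) (hml m₀ hm₀) he i
      have hlt : d n m < d n m₀ := lt_of_le_of_ne (hmax m hm) hdm
      rw [Polynomial.coeff_eq_zero_of_natDegree_lt (by rw [natDegree_P]; exact hlt), mul_zero]
    · intro h
      exact absurd hm₀ h
  rw [hzero, Polynomial.coeff_zero] at hcoeff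
  exact (MvPolynomial.mem_support_iff.mp hm₀) hcoeff.symm

end Stmt12

theorem stmt12 (n : ℕ) (hn : 1 ≤ n) (f : MvPolynomial (Fin n) ℤ) :
    ∃! g : MvPolynomial (Fin n) ℤ,
      (∀ m ∈ g.support, ∀ i : Fin n, m i ≤ 1) ∧
      f - g ∈ Ideal.span (Set.range (gens' n)) := by
  obtain ⟨g, hg, hfg⟩ := Stmt12.good_all f
  refine ⟨g, ⟨hg, hfg⟩, ?_⟩
  rintro g' ⟨hg', hfg'⟩
  have hmem : g' - g ∈ Ideal.span (Set.range (gens' n)) := by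
    have he : g' - g = (f - g) - (f - g') := by ring
    rw [he]
    exact Ideal.sub_mem _ hfg hfg'
  have hml : ∀ m ∈ (g' - g).support, ∀ i : Fin n, m i ≤ 1 := by
    intro m hm i
    rcases Finset.mem_union.mp (MvPolynomial.support_sub _ g' g hm) with h | h
    · exact hg' m h i
    · exact hg m h i
  have h0 := Stmt12.multilinear_zero hn _ hml hmem
  exact sub_eq_zero.mp h0
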